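/- Let v be a submodular set function on (Ω,𝓕), and let E, K₁, …, Kₙ be measurable with a chain decomposition Ω \ K = ⋃ᵢ₌₁^{n'} (C'ᵢ \ D'ᵢ) where C'₁ ⊇ D'₁ ⊇ ⋯ ⊇ D'_{n'}. Then Σᵢ₌₁^{n'} (v(C'ᵢ) − v(D'ᵢ)) ≤ v(⋃ᵢ₌₁^{n'} (C'ᵢ \ D'ᵢ)). (Chain-sum bound from the submodular inequality applied iteratively.) -/
import Mathlib


open Set

theorem chain_sum_bound {Ω : Type*} [MeasurableSpace Ω] (v : Set Ω → ℝ)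
    (hv0 : v ∅ = 0)
    (hmono : ∀ A B : Set Ω, MeasurableSet A → MeasurableSet B → A ⊆ B → v A ≤ v B)
    (hsub : ∀ A B : Set Ω, MeasurableSet A → MeasurableSet B →
      v (A ∪ B) + v (A ∩ B) ≤ v A + v B)
    (n' : ℕ) (C D : ℕ → Set Ω)
    (hC : ∀ i < n', MeasurableSet (C i)) (hD : ∀ i < n', MeasurableSet (D i))
    (hDC : ∀ i < n', D i ⊆ C i) (hCD : ∀ i, i + 1 < n' → C (i + 1) ⊆ D i) :
    ∑ i ∈ Finset.range n', (v (C i) - v (D i))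
      ≤ v (⋃ i ∈ Finset.range n', C i \ D i) := by
  -- chain monotonicity
  have hCC : ∀ i j, i ≤ j → j < n' → C j ⊆ C i := by
    intro i j hij
    induction j, hij using Nat.le_induction with
    | base => intro _; rfl
    | succ j hij ih =>
      intro hj
      exact (hCD j hj).trans ((hDC j (by omega)).trans (ih (by omega)))
  have hCD' : ∀ i j, i < j → j < n' → C j ⊆ D i := by
    intro i j hij hj
    exact (hCC (i + 1) j hij hj).trans (hCD i (by omega))
  set A : ℕ → Set Ω := fun t => ⋃ i ∈ Finset.Ico t n', C i \ D i with hA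
  have hAmeas : ∀ t, MeasurableSet (A t) := by
    intro t
    exact Finset.measurableSet_biUnion _ fun i hi =>
      (hC i (Finset.mem_Ico.mp hi).2).diff (hD i (Finset.mem_Ico.mp hi).2)
  have key : ∀ k m, m + k = n' →
      ∑ i ∈ Finset.Ico m n', (v (C i) - v (D i)) ≤ v (A m) := by
    intro k
    induction k with
    | zero =>
      intro m hm
      have : Finset.Ico m n' = ∅ := by
        rw [Finset.Ico_eq_empty_iff]; omega
      have h2 : A m = ∅ := by simp only [hA]; rw [this]; simp
      rw [this, Finset.sum_empty, h2, hv0]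
    | succ k ih =>
      intro m hm
      have hm' : m < n' := by omega
      have hunion : A m ∪ D m = C m := by
        apply Set.Subset.antisymm
        · apply Set.union_subset
          · intro x hx
            simp only [hA, Set.mem_iUnion, Finset.mem_Ico] at hx
            obtain ⟨i, ⟨hmi, hin⟩, hxi⟩ := hx
            exact hCC m i hmi hin hxi.1
          · exact hDC m hm'
        · intro x hx
          by_cases hxd : x ∈ D m
          · exact Or.inr hxd
          · left
            simp only [hA, Set.mem_iUnion, Finset.mem_Ico]
            exact ⟨m, ⟨le_refl m, hm'⟩, hx, hxd⟩
      have hinter : A m ∩ D m = A (m + 1) := by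
        apply Set.Subset.antisymm
        · rintro x ⟨hxA, hxD⟩
          simp only [hA, Set.mem_iUnion, Finset.mem_Ico] at hxA ⊢
          obtain ⟨i, ⟨hmi, hin⟩, hxi⟩ := hxA
          rcases Nat.lt_or_ge m i with h | h
          · exact ⟨i, ⟨h, hin⟩, hxi⟩
          · exfalso
            have him : i = m := by omega
            rw [him] at hxi
            exact hxi.2 hxD
        · intro x hx
          simp only [hA, Set.mem_inter_iff, Set.mem_iUnion, Finset.mem_Ico] at hx ⊢
          obtain ⟨i, ⟨hmi, hin⟩, hxi⟩ := hx
          exact ⟨⟨i, ⟨by omega, hin⟩, hxi⟩, hCD' m i (by omega) hin hxi.1⟩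
      have hstep := hsub (A m) (D m) (hAmeas m) (hD m hm')
      rw [hunion, hinter] at hstep
      have ihm := ih (m + 1) (by omega)
      rw [Finset.sum_eq_sum_Ico_succ_bot hm']
      linarith
  rw [Finset.range_eq_Ico]
  exact key n' 0 (by omega)
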